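/- Let (X,𝔄,P) be a complete probability space, φ a lower density on (X,𝔄,P), and suppose P(φ(E) ∪ φ(E^c)) = 1 for all E ∈ 𝔄. If σ is a lifting on (X,𝔄,P) with φ(E) ⊆ σ(E) for all E ∈ 𝔄, then the map π defined by π(E) := σ(φ(E)) satisfies π(E^c) = (π(E))^c for all E, and π is a lifting on (X,𝔄,P). -/
import Mathlib


open MeasureTheory Set

/-- A lower density on the probability space given by `P`. -/
def IsLowerDensity {X : Type*} [MeasurableSpace X] (P : Measure X) (φ : Set X → Set X) : Prop :=
  (∀ E, MeasurableSet E → MeasurableSet (φ E) ∧ P (symmDiff E (φ E)) = 0) ∧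
  (∀ E F, MeasurableSet E → MeasurableSet F → P (symmDiff E F) = 0 → φ E = φ F) ∧
  φ ∅ = ∅ ∧ φ Set.univ = Set.univ ∧
  (∀ E F, MeasurableSet E → MeasurableSet F → φ (E ∩ F) = φ E ∩ φ F)

/-- A lifting: a lower density which also commutes with complements. -/
def IsLifting {X : Type*} [MeasurableSpace X] (P : Measure X) (σ : Set X → Set X) : Prop :=
  IsLowerDensity P σ ∧ ∀ E, MeasurableSet E → σ Eᶜ = (σ E)ᶜ

theorem stmt7 {X : Type*} [MeasurableSpace X] (P : Measure X)
    [IsProbabilityMeasure P] [P.IsComplete]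
    (φ : Set X → Set X) (hφ : IsLowerDensity P φ)
    (hcompl : ∀ E, MeasurableSet E → P (φ E ∪ φ Eᶜ) = 1)
    (σ : Set X → Set X) (hσ : IsLifting P σ)
    (hsub : ∀ E, MeasurableSet E → φ E ⊆ σ E) :
    (∀ E, MeasurableSet E → σ (φ Eᶜ) = (σ (φ E))ᶜ) ∧
      IsLifting P (fun E => σ (φ E)) := by
  obtain ⟨hφ1, hφ2, hφ0, hφu, hφi⟩ := hφ
  obtain ⟨⟨hσ1, hσ2, hσ0, hσu, hσi⟩, hσc⟩ := hσ
  have key : ∀ E, MeasurableSet E → σ (φ Eᶜ) = (σ (φ E))ᶜ := by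
    intro E hE
    have hφE := (hφ1 E hE).1
    have hφEc := (hφ1 Eᶜ hE.compl).1
    have hdisj : φ E ∩ φ Eᶜ = ∅ := by
      rw [← hφi E Eᶜ hE hE.compl, inter_compl_self, hφ0]
    have hnull : P (symmDiff (φ E)ᶜ (φ Eᶜ)) = 0 := by
      have h1 : P ((φ E ∪ φ Eᶜ)ᶜ) = 0 := by
        rw [measure_compl (hφE.union hφEc) (measure_ne_top P _), hcompl E hE,
          measure_univ, tsub_self]
      refine measure_mono_null ?_ h1
      intro x hx
      rcases Set.mem_symmDiff.mp hx with ⟨hx1, hx2⟩ | ⟨hx1, hx2⟩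
      · intro hx3
        rcases hx3 with h | h
        · exact hx1 h
        · exact hx2 h
      · exact absurd (show x ∈ φ E ∩ φ Eᶜ from ⟨not_not.mp hx2, hx1⟩)
          (by simp [hdisj])
    have h2 : σ (φ E)ᶜ = σ (φ Eᶜ) := hσ2 _ _ hφE.compl hφEc hnull
    rw [← h2, hσc _ hφE]
  refine ⟨key, ⟨?_, ?_, ?_, ?_, ?_⟩, fun E hE => key E hE⟩
  · intro E hE
    have hφE := hφ1 E hE
    refine ⟨(hσ1 _ hφE.1).1, ?_⟩
    exact measure_mono_null (symmDiff_triangle E (φ E) (σ (φ E)))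
      (measure_union_null hφE.2 (hσ1 _ hφE.1).2)
  · intro E F hE hF h
    simp only [hφ2 E F hE hF h]
  · simp only [hφ0, hσ0]
  · simp only [hφu, hσu]
  · intro E F hE hF
    simp only [hφi E F hE hF, hσi _ _ (hφ1 E hE).1 (hφ1 F hF).1]
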